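/- In the group G = ⟨x, y | xy = (yx)²⟩, the element xy is not equal to the identity. -/
import Mathlib


/-- The single relator `x * y * ((y*x)^2)⁻¹` for the presentation `⟨x, y | xy = (yx)²⟩`. -/
def corkRels : Set (FreeGroup (Fin 2)) :=
  {FreeGroup.of 0 * FreeGroup.of 1 * ((FreeGroup.of 1 * FreeGroup.of 0) ^ 2)⁻¹}

/-- Target map into `S₃`: `x ↦ (0 1)`, `y ↦ (1 2)`. -/
def corkF : Fin 2 → Equiv.Perm (Fin 3) :=
  ![Equiv.swap 0 1, Equiv.swap 1 2]

lemma corkF_rel : ∀ r ∈ corkRels, FreeGroup.lift corkF r = 1 := by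
  intro r hr
  rw [corkRels, Set.mem_singleton_iff] at hr
  subst hr
  simp only [map_mul, map_inv, map_pow, FreeGroup.lift_apply_of, corkF]
  decide

/-- In the group `G = ⟨x, y | xy = (yx)²⟩`, the element `xy` is not the identity. -/
theorem xy_ne_one_in_cork_group :
    (PresentedGroup.of 0 * PresentedGroup.of 1 : PresentedGroup corkRels) ≠ 1 := by
  intro h
  have := congrArg (PresentedGroup.toGroup corkF_rel) h
  rw [map_mul, map_one, PresentedGroup.toGroup.of, PresentedGroup.toGroup.of] at this
  revert this
  decide
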